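/- arXiv:2509.12359 — 5 statements merged into one kernel-verified Lean document; each statement's English description precedes it below -/
import Mathlib

section
/- Let (Ω, 𝔽, P) be a probability space, Φ : Ω → ℝ a random variable, and R_s > 0. Define the fractional equivocation Λ : Ω → ℝ by Λ(ω) = 0 if Φ(ω) ≤ 1, Λ(ω) = log₂(Φ(ω))/R_s if 1 < Φ(ω) < 2^{R_s}, and Λ(ω) = 1 if Φ(ω) ≥ 2^{R_s}. Then the average fractional equivocation satisfies E[Λ] = 1 − (1/log(2^{R_s})) · ∫_1^{2^{R_s}} F_Φ(z)/z dz, where F_Φ(z) = P(Φ ≤ z) is the CDF of Φ and log denotes the natural logarithm. -/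
open MeasureTheory

/-- Proposition 4: the average fractional equivocation satisfies
`E[Λ] = 1 - (1/log(2^Rs)) ∫_1^{2^Rs} F_Φ(z)/z dz`. -/
theorem stmt3 {Ω : Type*} [MeasurableSpace Ω] (P : Measure Ω) [IsProbabilityMeasure P]
    (Φ : Ω → ℝ) (hΦ : Measurable Φ) (Rs : ℝ) (hRs : 0 < Rs)
    (Λ : Ω → ℝ)
    (hΛ : ∀ ω, Λ ω = if Φ ω ≤ 1 then 0
      else if Φ ω < (2:ℝ) ^ Rs then Real.logb 2 (Φ ω) / Rs else 1) :
    ∫ ω, Λ ω ∂P = 1 - (1 / Real.log ((2:ℝ) ^ Rs)) *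
      ∫ z in (1:ℝ)..((2:ℝ) ^ Rs), (P {ω | Φ ω ≤ z}).toReal / z := by
  set c : ℝ := (2:ℝ) ^ Rs with hcdef
  have hc1 : (1:ℝ) < c :=
    (Real.one_lt_rpow_iff_of_pos (by norm_num)).mpr (Or.inl ⟨one_lt_two, hRs⟩)
  set L : ℝ := Real.log c with hLdef
  have hL : L = Rs * Real.log 2 := Real.log_rpow (by norm_num) Rs
  have hlog2 : (0:ℝ) < Real.log 2 := Real.log_pos one_lt_two
  have hLpos : 0 < L := by rw [hL]; positivity
  set g : Ω → ℝ → ℝ := fun ω z => if 1 < z ∧ z < Φ ω then 1 / z else 0 with hgdef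
  -- integral of 1/z over Ioo 1 m
  have hlogint : ∀ m : ℝ, 1 ≤ m → ∫ z in Set.Ioo (1:ℝ) m, 1 / z = Real.log m := by
    intro m hm
    rw [← integral_Ioc_eq_integral_Ioo, ← intervalIntegral.integral_of_le hm,
      integral_one_div, div_one]
    rw [Set.uIcc_of_le hm]
    rintro ⟨h0, -⟩
    norm_num at h0
  -- pointwise identity
  have key : ∀ ω, ∫ z in Set.Ioc (1:ℝ) c, g ω z = L * Λ ω := by
    intro ω
    have hind : ∀ z, g ω z = (Set.Ioo (1:ℝ) (Φ ω)).indicator (fun z => 1 / z) z := by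
      intro z
      simp only [hgdef, Set.indicator, Set.mem_Ioo]
    simp only [hind]
    rw [integral_Ioc_eq_integral_Ioo, setIntegral_indicator measurableSet_Ioo,
      Set.Ioo_inter_Ioo, max_self]
    rw [hΛ ω]
    by_cases h1 : Φ ω ≤ 1
    · have : min c (Φ ω) ≤ 1 := le_trans (min_le_right _ _) h1
      rw [if_pos h1, Set.Ioo_eq_empty (by intro h; exact absurd (lt_of_lt_of_le h this) (lt_irrefl _))]
      simp
    · push_neg at h1
      rw [if_neg (not_le.mpr h1)]
      by_cases h2 : Φ ω < c
      · rw [if_pos h2, min_eq_right h2.le, hlogint _ h1.le]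
        rw [Real.logb, hL]
        field_simp
      · push_neg at h2
        rw [if_neg (not_lt.mpr h2), min_eq_left h2, hlogint _ hc1.le, mul_one]
  -- measurability of the uncurried integrand
  have hmeas : Measurable (fun p : Ω × ℝ => g p.1 p.2) := by
    apply Measurable.ite
    · exact (measurableSet_lt measurable_const measurable_snd).inter
        (measurableSet_lt measurable_snd (hΦ.comp measurable_fst))
    · exact measurable_const.div measurable_snd
    · exact measurable_const
  have hgbound : ∀ ω z, ‖g ω z‖ ≤ 1 := by
    intro ω z
    simp only [hgdef]
    split
    · next h =>
      rw [Real.norm_eq_abs, abs_of_pos (one_div_pos.mpr (by linarith [h.1] : (0:ℝ) < z))]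
      rw [div_le_one (by linarith [h.1])]
      linarith [h.1]
    · simp
  haveI : IsFiniteMeasure (volume.restrict (Set.Ioc (1:ℝ) c)) := by
    constructor
    rw [Measure.restrict_apply_univ, Real.volume_Ioc]
    exact ENNReal.ofReal_lt_top
  have hint : Integrable (Function.uncurry g) (P.prod (volume.restrict (Set.Ioc (1:ℝ) c))) := by
    refine (integrable_const (1:ℝ)).mono' hmeas.aestronglyMeasurable ?_
    exact ae_of_all _ fun p => hgbound p.1 p.2
  -- inner integral after swap
  have inner : ∀ z ∈ Set.Ioc (1:ℝ) c,
      ∫ ω, g ω z ∂P = (1 - (P {ω | Φ ω ≤ z}).toReal) / z := by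
    intro z hz
    have hz1 : (1:ℝ) < z := hz.1
    have h1 : ∀ ω, g ω z = ({ω | z < Φ ω}).indicator (fun _ => 1 / z) ω := by
      intro ω
      simp only [hgdef, Set.indicator, Set.mem_setOf_eq, hz1, true_and]
    simp only [h1]
    rw [integral_indicator_const _ (measurableSet_lt measurable_const hΦ)]
    have hcompl : {ω | z < Φ ω} = {ω | Φ ω ≤ z}ᶜ := by
      ext ω; simp [not_le]
    rw [hcompl, measureReal_def, prob_compl_eq_one_sub (show MeasurableSet {ω | Φ ω ≤ z} from hΦ measurableSet_Iic),
      ENNReal.toReal_sub_of_le prob_le_one ENNReal.one_ne_top, ENNReal.toReal_one,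
      smul_eq_mul]
    ring
  -- CDF and integrabilities
  set F : ℝ → ℝ := fun z => (P {ω | Φ ω ≤ z}).toReal with hFdef
  have hFmono : Monotone F := by
    intro a b hab
    exact ENNReal.toReal_mono (measure_ne_top P _)
      (measure_mono fun ω (h : Φ ω ≤ a) => le_trans h hab)
  have hFle : ∀ z, F z ≤ 1 := by
    intro z
    have : P {ω | Φ ω ≤ z} ≤ 1 := prob_le_one
    simpa using ENNReal.toReal_mono ENNReal.one_ne_top this
  have hF0 : ∀ z, 0 ≤ F z := fun z => ENNReal.toReal_nonneg
  have hI1 : IntegrableOn (fun z => 1 / z) (Set.Ioc (1:ℝ) c) volume := by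
    refine (integrable_const (1:ℝ)).mono'
      ((measurable_const.div measurable_id).aestronglyMeasurable) ?_
    refine (ae_restrict_mem measurableSet_Ioc).mono fun z hz => ?_
    rw [Real.norm_eq_abs, abs_of_pos (one_div_pos.mpr (by linarith [hz.1] : (0:ℝ) < z)),
      div_le_one (by linarith [hz.1])]
    linarith [hz.1]
  have hIF : IntegrableOn (fun z => F z / z) (Set.Ioc (1:ℝ) c) volume := by
    refine (integrable_const (1:ℝ)).mono'
      ((hFmono.measurable.div measurable_id).aestronglyMeasurable) ?_
    refine (ae_restrict_mem measurableSet_Ioc).mono fun z hz => ?_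
    have hz0 : (0:ℝ) < z := by linarith [hz.1]
    rw [Real.norm_eq_abs, abs_of_nonneg (div_nonneg (hF0 z) hz0.le),
      div_le_one hz0]
    calc F z ≤ 1 := hFle z
      _ ≤ z := hz.1.le
  -- main computation
  have step1 : ∫ ω, Λ ω ∂P = (1 / L) * ∫ ω, (∫ z in Set.Ioc (1:ℝ) c, g ω z) ∂P := by
    rw [← integral_const_mul]
    congr 1
    funext ω
    rw [key ω]
    field_simp
  rw [step1, integral_integral_swap hint]
  rw [setIntegral_congr_fun measurableSet_Ioc inner]
  have split : ∫ z in Set.Ioc (1:ℝ) c, (1 - F z) / z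
      = (∫ z in Set.Ioc (1:ℝ) c, 1 / z) - ∫ z in Set.Ioc (1:ℝ) c, F z / z := by
    rw [← integral_sub hI1 hIF]
    congr 1
    funext z
    rw [sub_div]
  have hlogc : ∫ z in Set.Ioc (1:ℝ) c, 1 / z = L := by
    rw [integral_Ioc_eq_integral_Ioo, hlogint c hc1.le]
  rw [show (fun z => (1 - (P {ω | Φ ω ≤ z}).toReal) / z) = fun z => (1 - F z) / z from rfl,
    split, hlogc, intervalIntegral.integral_of_le hc1.le]
  rw [show (∫ z in Set.Ioc (1:ℝ) c, (P {ω | Φ ω ≤ z}).toReal / z ∂volume)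
      = ∫ z in Set.Ioc (1:ℝ) c, F z / z from rfl]
  field_simp
end

section
/- Let (Ω, 𝔽, P) be a probability space, Φ : Ω → ℝ a random variable, and R_s > 0. Define the fractional equivocation Λ : Ω → ℝ by Λ(ω) = 0 if Φ(ω) ≤ 1, Λ(ω) = log₂(Φ(ω))/R_s if 1 < Φ(ω) < 2^{R_s}, and Λ(ω) = 1 if Φ(ω) ≥ 2^{R_s}. Then the average information leakage rate R_L := (1 − E[Λ]) · R_s satisfies R_L = (1/log 2) · ∫_1^{2^{R_s}} F_Φ(z)/z dz, where F_Φ(z) = P(Φ ≤ z) is the CDF of Φ and log denotes the natural logarithm. -/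
open MeasureTheory

lemma aux_ii {u v : ℝ} (hu : 0 < u) (hv : 0 < v) (a : ℝ) :
    IntervalIntegrable (fun z => (if a ≤ z then (1:ℝ) else 0)/z) volume u v := by
  have h1 : IntervalIntegrable (fun z : ℝ => z⁻¹) volume u v := by
    apply intervalIntegral.intervalIntegrable_inv (f := fun z : ℝ => z)
    · intro x hx
      rcases Set.mem_uIcc.1 hx with h | h
      · exact (lt_of_lt_of_le hu h.1).ne'
      · exact (lt_of_lt_of_le hv h.1).ne'
    · exact continuousOn_id
  have heq : (fun z => (if a ≤ z then (1:ℝ) else 0)/z)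
      = Set.indicator (Set.Ici a) (fun z : ℝ => z⁻¹) := by
    funext z
    by_cases h : a ≤ z <;> simp [Set.indicator_apply, h, one_div]
  rw [heq, intervalIntegrable_iff]
  rw [intervalIntegrable_iff] at h1
  exact h1.indicator measurableSet_Ici

lemma aux_ptwise (a T : ℝ) (hT : 1 ≤ T) :
    (∫ z in (1:ℝ)..T, (if a ≤ z then (1:ℝ) else 0)/z) =
      if a ≤ 1 then Real.log T else if a < T then Real.log T - Real.log a else 0 := by
  by_cases h1 : a ≤ 1
  · rw [if_pos h1]
    rw [intervalIntegral.integral_congr (g := fun z => z⁻¹)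
      (by intro z hz
          rw [Set.uIcc_of_le hT] at hz
          show (if a ≤ z then (1:ℝ) else 0)/z = z⁻¹
          rw [if_pos (h1.trans hz.1), one_div])]
    rw [integral_inv (by rw [Set.uIcc_of_le hT]; rintro ⟨h, -⟩; linarith)]
    rw [div_one]
  · rw [if_neg h1]
    push_neg at h1
    by_cases h2 : a < T
    · rw [if_pos h2]
      have hsplit : (∫ z in (1:ℝ)..T, (if a ≤ z then (1:ℝ) else 0)/z)
          = (∫ z in (1:ℝ)..a, (if a ≤ z then (1:ℝ) else 0)/z)
            + ∫ z in a..T, (if a ≤ z then (1:ℝ) else 0)/z :=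
        (intervalIntegral.integral_add_adjacent_intervals
          (aux_ii one_pos (by linarith) a) (aux_ii (by linarith) (by linarith) a)).symm
      have hne : ∀ᵐ z : ℝ, z ≠ a := by
        rw [ae_iff]
        simpa using (Real.volume_singleton (a := a))
      have hfirst : (∫ z in (1:ℝ)..a, (if a ≤ z then (1:ℝ) else 0)/z) = 0 := by
        rw [intervalIntegral.integral_congr_ae
          (g := fun _ => (0:ℝ)) ?_, intervalIntegral.integral_zero]
        filter_upwards [hne] with z hz hmem
        rw [Set.uIoc_of_le h1.le] at hmem
        rw [if_neg (not_le.2 (lt_of_le_of_ne hmem.2 hz))]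
        simp
      have hsecond : (∫ z in a..T, (if a ≤ z then (1:ℝ) else 0)/z)
          = Real.log T - Real.log a := by
        rw [intervalIntegral.integral_congr (g := fun z => z⁻¹)
          (by intro z hz
              rw [Set.uIcc_of_le h2.le] at hz
              show (if a ≤ z then (1:ℝ) else 0)/z = z⁻¹
              rw [if_pos hz.1, one_div])]
        rw [integral_inv (by rw [Set.uIcc_of_le h2.le]; rintro ⟨h, -⟩; linarith)]
        rw [Real.log_div (by linarith) (by linarith)]
      rw [hsplit, hfirst, hsecond, zero_add]
    · rw [if_neg h2]
      push_neg at h2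
      have hne : ∀ᵐ z : ℝ, z ≠ a := by
        rw [ae_iff]
        simpa using (Real.volume_singleton (a := a))
      rw [intervalIntegral.integral_congr_ae (g := fun _ => (0:ℝ)) ?_,
        intervalIntegral.integral_zero]
      filter_upwards [hne] with z hz hmem
      rw [Set.uIoc_of_le hT] at hmem
      rw [if_neg (by
        intro hle
        exact hz (le_antisymm (hmem.2.trans h2) hle))]
      simp

/-- Corollary 1: the average information leakage rate satisfies
`R_L = (1 - E[Λ]) Rs = (1/log 2) ∫_1^{2^Rs} F_Φ(z)/z dz`. -/
theorem stmt4 {Ω : Type*} [MeasurableSpace Ω] (P : Measure Ω) [IsProbabilityMeasure P]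
    (Φ : Ω → ℝ) (hΦ : Measurable Φ) (Rs : ℝ) (hRs : 0 < Rs)
    (Λ : Ω → ℝ)
    (hΛ : ∀ ω, Λ ω = if Φ ω ≤ 1 then 0
      else if Φ ω < (2:ℝ) ^ Rs then Real.logb 2 (Φ ω) / Rs else 1) :
    (1 - ∫ ω, Λ ω ∂P) * Rs = (1 / Real.log 2) *
      ∫ z in (1:ℝ)..((2:ℝ) ^ Rs), (P {ω | Φ ω ≤ z}).toReal / z := by
  set T : ℝ := (2:ℝ) ^ Rs with hTdef
  have hT1 : 1 < T := Real.one_lt_rpow_iff_of_pos two_pos |>.2 (Or.inl ⟨one_lt_two, hRs⟩)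
  have hlog2 : (0:ℝ) < Real.log 2 := Real.log_pos one_lt_two
  have hlogT : Real.log T = Rs * Real.log 2 := Real.log_rpow two_pos Rs
  -- Λ is measurable and bounded
  have hΛfun : Λ = fun ω => if Φ ω ≤ 1 then 0
      else if Φ ω < T then Real.logb 2 (Φ ω) / Rs else 1 := funext hΛ
  have hΛmeas : Measurable Λ := by
    rw [hΛfun]
    apply Measurable.ite (measurableSet_le hΦ measurable_const) measurable_const
    apply Measurable.ite (measurableSet_lt hΦ measurable_const) _ measurable_const
    simp only [Real.logb]
    exact ((Real.measurable_log.comp hΦ).div_const _).div_const _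
  have hΛbd : ∀ ω, ‖Λ ω‖ ≤ 1 := by
    intro ω
    rw [hΛ ω, Real.norm_eq_abs]
    split_ifs with h1 h2
    · simp
    · push_neg at h1
      rw [abs_of_nonneg (div_nonneg (Real.logb_nonneg one_lt_two h1.le) hRs.le)]
      rw [div_le_one hRs]
      calc Real.logb 2 (Φ ω) ≤ Real.logb 2 T :=
            Real.logb_le_logb_of_le one_lt_two (by linarith) h2.le
        _ = Rs := Real.logb_rpow two_pos (by norm_num)
    · simp
  have hΛint : Integrable Λ P :=
    ⟨hΛmeas.aestronglyMeasurable, HasFiniteIntegral.of_bounded (ae_of_all _ hΛbd)⟩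
  -- pointwise identity
  have hpt : ∀ ω, (1 - Λ ω) * Rs * Real.log 2
      = ∫ z in (1:ℝ)..T, (if Φ ω ≤ z then (1:ℝ) else 0)/z := by
    intro ω
    rw [aux_ptwise (Φ ω) T hT1.le, hΛ ω]
    split_ifs with h1 h2
    · rw [hlogT]; ring
    · rw [hlogT, Real.logb]
      field_simp
    · ring
  -- express LHS as an integral over Ω
  have hL : (1 - ∫ ω, Λ ω ∂P) * Rs * Real.log 2
      = ∫ ω, (∫ z in (1:ℝ)..T, (if Φ ω ≤ z then (1:ℝ) else 0)/z) ∂P := by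
    rw [← integral_congr_ae (ae_of_all _ hpt)]
    rw [integral_mul_const, integral_mul_const]
    congr 1
    rw [integral_sub (integrable_const 1) hΛint]
    simp
  -- Fubini
  haveI : IsFiniteMeasure (volume.restrict (Set.Ioc (1:ℝ) T)) :=
    ⟨by rw [Measure.restrict_apply_univ]; exact measure_Ioc_lt_top⟩
  have hmeas2 : Measurable (Function.uncurry fun (ω : Ω) (z : ℝ) =>
      (if Φ ω ≤ z then (1:ℝ) else 0)/z) := by
    apply Measurable.div _ measurable_snd
    exact Measurable.ite (measurableSet_le (hΦ.comp measurable_fst) measurable_snd)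
      measurable_const measurable_const
  have hintprod : Integrable (Function.uncurry fun (ω : Ω) (z : ℝ) =>
      (if Φ ω ≤ z then (1:ℝ) else 0)/z) (P.prod (volume.restrict (Set.Ioc (1:ℝ) T))) := by
    refine ⟨hmeas2.aestronglyMeasurable, HasFiniteIntegral.of_bounded (C := 1) ?_⟩
    have hz : ∀ᵐ p : Ω × ℝ ∂(P.prod (volume.restrict (Set.Ioc (1:ℝ) T))),
        p.2 ∈ Set.Ioc (1:ℝ) T := by
      refine Measure.ae_prod_mem_iff_ae_ae_mem (by
        exact measurable_snd (measurableSet_Ioc)) |>.2 ?_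
      exact ae_of_all _ fun ω => ae_restrict_mem measurableSet_Ioc
    filter_upwards [hz] with p hp
    rcases hp with ⟨hp1, hp2⟩
    rw [Function.uncurry_def, Real.norm_eq_abs, abs_div,
      abs_of_pos (by linarith : (0:ℝ) < p.2),
      div_le_one (by linarith : (0:ℝ) < p.2)]
    split_ifs
    · rw [abs_one]; linarith
    · rw [abs_zero]; linarith
  have hswap := integral_integral_swap hintprod
  have hLHS : (∫ ω, (∫ z in (1:ℝ)..T, (if Φ ω ≤ z then (1:ℝ) else 0)/z) ∂P)
      = ∫ ω, (∫ z in Set.Ioc (1:ℝ) T, (if Φ ω ≤ z then (1:ℝ) else 0)/z) ∂P := by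
    congr 1
    funext ω
    rw [intervalIntegral.integral_of_le hT1.le]
  have hinner : ∀ z : ℝ, (∫ ω, (if Φ ω ≤ z then (1:ℝ) else 0)/z ∂P)
      = (P {ω | Φ ω ≤ z}).toReal / z := by
    intro z
    rw [integral_div]
    congr 1
    have : (fun ω => if Φ ω ≤ z then (1:ℝ) else 0)
        = Set.indicator {ω | Φ ω ≤ z} (fun _ => (1:ℝ)) := by
      funext ω
      by_cases h : Φ ω ≤ z <;> simp [Set.indicator_apply, h]
    rw [this, integral_indicator_const _ (measurableSet_le hΦ measurable_const)]
    simp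
    rfl
  rw [hLHS, hswap] at hL
  have hR : (∫ z in (1:ℝ)..T, (P {ω | Φ ω ≤ z}).toReal / z)
      = ∫ z in Set.Ioc (1:ℝ) T, ∫ ω, (if Φ ω ≤ z then (1:ℝ) else 0)/z ∂P := by
    rw [intervalIntegral.integral_of_le hT1.le]
    exact setIntegral_congr_fun measurableSet_Ioc fun z _ => (hinner z).symm
  rw [hR, ← hL]
  field_simp
end

section
/- Let a ∈ ℕ, ν > 0, ρ_B > 0, ρ_E > 0, and z ≥ 1. Then ∫_0^∞ y^{ν−1} · ((y+1)·z − 1)^a · exp(−y/ρ_E) · exp(−((y+1)·z − 1)/ρ_B) dy = exp(−(z−1)/ρ_B) · ∑_{k=0}^{a} C(a,k) · z^k · (z−1)^{a−k} · Γ(k+ν) · (ρ_B·ρ_E/(ρ_B + z·ρ_E))^{k+ν}, where C(a,k) is the binomial coefficient and Γ is the Gamma function. -/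
open MeasureTheory

/-- Evaluation of the integral `I₂` in Appendix A (Proposition 2). -/
theorem stmt8 (a : ℕ) (ν ρB ρE z : ℝ) (hν : 0 < ν) (hρB : 0 < ρB) (hρE : 0 < ρE)
    (hz : 1 ≤ z) :
    ∫ y in Set.Ioi (0:ℝ),
        y ^ (ν - 1) * ((y + 1) * z - 1) ^ a * Real.exp (-y / ρE) *
          Real.exp (-((y + 1) * z - 1) / ρB) =
      Real.exp (-(z - 1) / ρB) *
        ∑ k ∈ Finset.range (a + 1),
          (a.choose k : ℝ) * z ^ k * (z - 1) ^ (a - k) * Real.Gamma ((k : ℝ) + ν) *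
            (ρB * ρE / (ρB + z * ρE)) ^ ((k : ℝ) + ν) := by
  have hz0 : (0:ℝ) < z := lt_of_lt_of_le one_pos hz
  set c : ℝ := 1/ρE + z/ρB with hc_def
  have hc : 0 < c := by positivity
  -- pointwise rewrite on Ioi 0
  have key : ∀ y ∈ Set.Ioi (0:ℝ),
      y ^ (ν - 1) * ((y + 1) * z - 1) ^ a * Real.exp (-y / ρE) *
          Real.exp (-((y + 1) * z - 1) / ρB)
        = Real.exp (-(z - 1) / ρB) *
            ∑ k ∈ Finset.range (a + 1),
              ((a.choose k : ℝ) * z ^ k * (z - 1) ^ (a - k)) *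
                (y ^ ((k : ℝ) + ν - 1) * Real.exp (-(c * y))) := by
    intro y hy
    rw [Set.mem_Ioi] at hy
    have h1 : ((y + 1) * z - 1) ^ a = (y * z + (z - 1)) ^ a := by ring_nf
    have h2 : Real.exp (-y / ρE) * Real.exp (-((y + 1) * z - 1) / ρB)
        = Real.exp (-(z - 1) / ρB) * Real.exp (-(c * y)) := by
      rw [← Real.exp_add, ← Real.exp_add]
      congr 1
      rw [hc_def]
      ring
    rw [mul_assoc, h2, h1, add_pow, Finset.mul_sum, Finset.mul_sum, Finset.sum_mul]
    refine Finset.sum_congr rfl fun k hk => ?_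
    have h3 : y ^ (ν - 1) * (y:ℝ) ^ k = y ^ ((k:ℝ) + ν - 1) := by
      rw [← Real.rpow_natCast y k, ← Real.rpow_add hy]
      ring_nf
    rw [mul_pow, ← h3]
    ring
  rw [setIntegral_congr_fun measurableSet_Ioi key, integral_const_mul]
  congr 1
  have hint : ∀ k ∈ Finset.range (a+1), IntegrableOn
      (fun y : ℝ => ((a.choose k : ℝ) * z ^ k * (z - 1) ^ (a - k)) *
        (y ^ ((k : ℝ) + ν - 1) * Real.exp (-(c * y)))) (Set.Ioi 0) := by
    intro k _
    refine Integrable.const_mul ?_ _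
    have := integrableOn_rpow_mul_exp_neg_mul_rpow
      (p := 1) (s := (k:ℝ) + ν - 1) (b := c) (by push_cast; linarith) one_pos hc
    simpa [Real.rpow_one, neg_mul, IntegrableOn] using this
  rw [integral_finset_sum _ hint]
  refine Finset.sum_congr rfl fun k _ => ?_
  rw [integral_const_mul, Real.integral_rpow_mul_exp_neg_mul_Ioi (by positivity) hc]
  have h1c : (1:ℝ)/c = ρB * ρE / (ρB + z * ρE) := by
    rw [hc_def]
    have : ρB + z * ρE > 0 := by positivity
    field_simp
  rw [h1c]
  ring
end

section
/- Let n be a positive natural number, ν > 0, ρ_B > 0, ρ_E > 0. Let X and Y be independent random variables where X has the Gamma distribution with shape n and scale ρ_B (density x ↦ x^{n−1} ρ_B^{−n} e^{−x/ρ_B}/Γ(n) on (0,∞)) and Y has the Gamma distribution with shape ν and scale ρ_E (density y ↦ y^{ν−1} ρ_E^{−ν} e^{−y/ρ_E}/Γ(ν) on (0,∞)). Then for every z > 0, P(X/Y ≤ z) = 1 − (ρ_B^ν / Γ(ν)) · ∑_{a=0}^{n−1} (z·ρ_E)^a · Γ(a+ν) / (a! · (ρ_B + z·ρ_E)^{a+ν}).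 -/
open MeasureTheory Set Real
open scoped ENNReal

/-- The Gamma(shape `k`, scale `ρ`) density on `(0,∞)`. -/
noncomputable def gammaScaleDensity (k ρ x : ℝ) : ℝ :=
  if 0 < x then x ^ (k - 1) * ρ ^ (-k) * Real.exp (-x / ρ) / Real.Gamma k else 0

lemma measurable_gammaScaleDensity (k ρ : ℝ) : Measurable (gammaScaleDensity k ρ) := by
  unfold gammaScaleDensity
  apply Measurable.ite measurableSet_Ioi
  · fun_prop
  · exact measurable_const

lemma integrableOn_rpow_exp (s c : ℝ) (hs : -1 < s) (hc : 0 < c) :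
    IntegrableOn (fun x : ℝ => x ^ s * Real.exp (-(c * x))) (Ioi 0) := by
  have := integrableOn_rpow_mul_exp_neg_mul_rpow hs zero_lt_one hc
  refine this.congr_fun (fun x hx => ?_) measurableSet_Ioi
  simp only [Real.rpow_one, neg_mul]

lemma hasDerivAt_erlangS (b : ℝ) (m : ℕ) (t : ℝ) :
    HasDerivAt (fun s => Real.exp (-(b * s)) *
        ∑ a ∈ Finset.range (m + 1), (b * s) ^ a / a.factorial)
      (-(Real.exp (-(b * t)) * (b * (b * t) ^ m / m.factorial))) t := by
  induction m with
  | zero =>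
    simp only [Finset.sum_range_one, pow_zero, Nat.factorial_zero, Nat.cast_one, div_one, mul_one]
    have h : HasDerivAt (fun s : ℝ => Real.exp (-(b * s))) (-b * Real.exp (-(b * t))) t := by
      have := (((hasDerivAt_id t).const_mul b).neg).exp
      simpa [mul_comm] using this
    simpa [mul_comm] using h
  | succ m ih =>
    have he : HasDerivAt (fun s : ℝ => Real.exp (-(b * s))) (-b * Real.exp (-(b * t))) t := by
      simpa [mul_comm] using (((hasDerivAt_id t).const_mul b).neg).exp
    have hp : HasDerivAt (fun s : ℝ => (b * s) ^ (m + 1) / (m + 1).factorial)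
        ((m + 1 : ℕ) * (b * t) ^ m * b / (m + 1).factorial) t := by
      have h1 : HasDerivAt (fun s : ℝ => (b * s)) b t := by
        simpa using (hasDerivAt_id t).const_mul b
      have := (h1.pow (m + 1)).div_const ((m + 1).factorial : ℝ)
      simpa [mul_comm, mul_assoc, mul_left_comm] using this
    have hterm : HasDerivAt (fun s : ℝ => Real.exp (-(b * s)) * ((b * s) ^ (m + 1) / (m + 1).factorial))
        (-b * Real.exp (-(b * t)) * ((b * t) ^ (m + 1) / (m + 1).factorial) +
          Real.exp (-(b * t)) * ((m + 1 : ℕ) * (b * t) ^ m * b / (m + 1).factorial)) t :=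
      he.mul hp
    have hsum := ih.add hterm
    have heq : (fun s : ℝ => Real.exp (-(b * s)) * ∑ a ∈ Finset.range (m + 2), (b * s) ^ a / a.factorial)
        = fun s : ℝ => (Real.exp (-(b * s)) * ∑ a ∈ Finset.range (m + 1), (b * s) ^ a / a.factorial)
          + Real.exp (-(b * s)) * ((b * s) ^ (m + 1) / (m + 1).factorial) := by
      funext s
      rw [Finset.sum_range_succ, mul_add]
    rw [show m + 1 + 1 = m + 2 from rfl] at *
    rw [heq]
    convert hsum using 1
    · rfl
    · rfl
    · rfl
    have hfact : ((m + 1).factorial : ℝ) = (m + 1 : ℕ) * (m.factorial : ℝ) := by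
      rw [Nat.factorial_succ]; push_cast; ring
    have hm : (m.factorial : ℝ) ≠ 0 := Nat.cast_ne_zero.mpr (Nat.factorial_ne_zero m)
    have hm1 : ((m + 1 : ℕ) : ℝ) ≠ 0 := by positivity
    rw [hfact]
    field_simp [hfact]
    push_cast
    ring

lemma erlangS_zero (b : ℝ) (n : ℕ) (hn : 0 < n) :
    Real.exp (-(b * 0)) * ∑ a ∈ Finset.range n, (b * 0) ^ a / a.factorial = 1 := by
  obtain ⟨m, rfl⟩ : ∃ m, n = m + 1 := ⟨n - 1, (Nat.succ_pred_eq_of_pos hn).symm⟩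
  rw [Finset.sum_range_succ']
  simp

lemma erlang_integral (b : ℝ) (n : ℕ) (hn : 0 < n) (t : ℝ) :
    ∫ x in (0:ℝ)..t, Real.exp (-(b * x)) * (b * (b * x) ^ (n - 1) / (n - 1).factorial)
      = 1 - Real.exp (-(b * t)) * ∑ a ∈ Finset.range n, (b * t) ^ a / a.factorial := by
  obtain ⟨m, rfl⟩ : ∃ m, n = m + 1 := ⟨n - 1, (Nat.succ_pred_eq_of_pos hn).symm⟩
  simp only [Nat.add_sub_cancel]
  have hderiv : ∀ x ∈ Set.uIcc (0:ℝ) t,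
      HasDerivAt (fun s => -(Real.exp (-(b * s)) *
          ∑ a ∈ Finset.range (m + 1), (b * s) ^ a / a.factorial))
        (Real.exp (-(b * x)) * (b * (b * x) ^ m / m.factorial)) x := by
    intro x _
    have := (hasDerivAt_erlangS b m x).neg
    rw [neg_neg] at this
    exact this
  have hcont : IntervalIntegrable
      (fun x => Real.exp (-(b * x)) * (b * (b * x) ^ m / m.factorial)) volume 0 t := by
    apply Continuous.intervalIntegrable
    fun_prop
  have := intervalIntegral.integral_eq_sub_of_hasDerivAt hderiv hcont
  rw [this]
  have h0 := erlangS_zero b (m + 1) (Nat.succ_pos m)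
  rw [h0]
  ring

lemma erlang_nonneg {b x : ℝ} (hb : 0 ≤ b) (hx : 0 ≤ x) (m k : ℕ) :
    0 ≤ Real.exp (-(b * x)) * (b * (b * x) ^ m / (k : ℝ)) :=
  mul_nonneg (Real.exp_nonneg _) (div_nonneg
    (mul_nonneg hb (pow_nonneg (mul_nonneg hb hx) m)) (Nat.cast_nonneg k))

lemma gammaScale_pos_eq (n : ℕ) (hn : 0 < n) (ρ : ℝ) (hρ : 0 < ρ) {x : ℝ} (hx : 0 < x) :
    gammaScaleDensity n ρ x =
      Real.exp (-(ρ⁻¹ * x)) * (ρ⁻¹ * (ρ⁻¹ * x) ^ (n - 1) / (n - 1).factorial) := by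
  obtain ⟨m, rfl⟩ : ∃ m, n = m + 1 := ⟨n - 1, (Nat.succ_pred_eq_of_pos hn).symm⟩
  simp only [Nat.add_sub_cancel]
  rw [gammaScaleDensity, if_pos hx]
  have h1 : ((m + 1 : ℕ) : ℝ) - 1 = (m : ℕ) := by push_cast; ring
  rw [h1, Real.rpow_natCast, show ((m + 1 : ℕ) : ℝ) = (m : ℝ) + 1 by push_cast; ring,
    Real.Gamma_nat_eq_factorial, Real.rpow_neg hρ.le,
    show ((m : ℝ) + 1) = (((m + 1 : ℕ) : ℝ)) by push_cast; ring, Real.rpow_natCast]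
  rw [show -x / ρ = -(ρ⁻¹ * x) by field_simp]
  rw [mul_pow, ← inv_pow]
  have : (ρ⁻¹) * ρ⁻¹ ^ m = ρ⁻¹ ^ (m + 1) := (pow_succ' ρ⁻¹ m).symm
  field_simp
  ring
  rw [mul_inv_cancel₀ hρ.ne', one_mul]

lemma gamma_Iic_zero (k ρ : ℝ) :
    volume.withDensity (fun x => ENNReal.ofReal (gammaScaleDensity k ρ x)) (Set.Iic 0) = 0 := by
  rw [withDensity_apply _ measurableSet_Iic]
  rw [setLIntegral_congr_fun measurableSet_Iic (fun x (hx : x ≤ 0) => ?_),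
    lintegral_zero]
  rw [gammaScaleDensity, if_neg (not_lt.mpr hx), ENNReal.ofReal_zero]

lemma gamma_survival (n : ℕ) (hn : 0 < n) (ρ : ℝ) (hρ : 0 < ρ)
    (h1 : volume.withDensity (fun x => ENNReal.ofReal (gammaScaleDensity n ρ x)) Set.univ = 1)
    {t : ℝ} (ht : 0 ≤ t) :
    volume.withDensity (fun x => ENNReal.ofReal (gammaScaleDensity n ρ x)) (Set.Ioi t)
      = ENNReal.ofReal (Real.exp (-(ρ⁻¹ * t)) *
          ∑ a ∈ Finset.range n, (ρ⁻¹ * t) ^ a / a.factorial) := by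
  set μ := volume.withDensity (fun x => ENNReal.ofReal (gammaScaleDensity n ρ x)) with hμ
  set S : ℝ := Real.exp (-(ρ⁻¹ * t)) * ∑ a ∈ Finset.range n, (ρ⁻¹ * t) ^ a / a.factorial with hS
  have hSnonneg : 0 ≤ S := by
    apply mul_nonneg (Real.exp_nonneg _)
    apply Finset.sum_nonneg
    intro a _
    positivity
  have hFS : ∫ x in (0:ℝ)..t,
      Real.exp (-(ρ⁻¹ * x)) * (ρ⁻¹ * (ρ⁻¹ * x) ^ (n - 1) / (n - 1).factorial) = 1 - S :=
    erlang_integral ρ⁻¹ n hn t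
  have hSle1 : 0 ≤ 1 - S := by
    rw [← hFS]
    exact intervalIntegral.integral_nonneg ht
      (fun x hx => erlang_nonneg (inv_nonneg.mpr hρ.le) hx.1 _ _)
  have hIoc : μ (Set.Ioc 0 t) = ENNReal.ofReal (1 - S) := by
    rw [hμ, withDensity_apply _ measurableSet_Ioc]
    rw [setLIntegral_congr_fun measurableSet_Ioc
      (fun x hx => by rw [gammaScale_pos_eq n hn ρ hρ hx.1])]
    rw [← ofReal_integral_eq_lintegral_ofReal]
    · rw [← intervalIntegral.integral_of_le ht, hFS]
    · apply Continuous.integrableOn_Ioc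
      fun_prop
    · refine (ae_restrict_iff' measurableSet_Ioc).mpr (ae_of_all _ (fun x hx => ?_))
      exact erlang_nonneg (inv_nonneg.mpr hρ.le) hx.1.le _ _
  have hIic : μ (Set.Iic t) = ENNReal.ofReal (1 - S) := by
    rw [← Set.Iic_union_Ioc_eq_Iic ht, measure_union _ measurableSet_Ioc, gamma_Iic_zero,
      zero_add, hIoc]
    exact Set.disjoint_left.mpr (fun a ha hb => absurd hb.1 (not_lt.mpr ha))
  rw [← Set.compl_Iic, measure_compl measurableSet_Iic (by rw [hIic]; exact ENNReal.ofReal_ne_top),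
    h1, hIic]
  rw [show (1 : ℝ≥0∞) = ENNReal.ofReal 1 from ENNReal.ofReal_one.symm,
    ← ENNReal.ofReal_sub 1 hSle1]
  norm_num

lemma gammaScaleDensity_nonneg {k ρ : ℝ} (hk : 0 < k) (hρ : 0 < ρ) (x : ℝ) :
    0 ≤ gammaScaleDensity k ρ x := by
  rw [gammaScaleDensity]
  split_ifs with h
  · have h1 : 0 ≤ x ^ (k - 1) := Real.rpow_nonneg h.le _
    have h2 : 0 ≤ ρ ^ (-k) := Real.rpow_nonneg hρ.le _
    have h3 : 0 < Real.Gamma k := Real.Gamma_pos_of_pos hk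
    positivity
  · exact le_refl 0

lemma key_pointwise (n : ℕ) (ν ρB ρE z : ℝ) (hν : 0 < ν) (hρB : 0 < ρB) (hρE : 0 < ρE)
    (hz : 0 < z) {y : ℝ} (hy : 0 < y) :
    gammaScaleDensity ν ρE y * (Real.exp (-(ρB⁻¹ * (z * y))) *
        ∑ a ∈ Finset.range n, (ρB⁻¹ * (z * y)) ^ a / a.factorial)
      = ∑ a ∈ Finset.range n, (ρE ^ (-ν) / Real.Gamma ν * (ρB⁻¹ * z) ^ a / a.factorial) *
          (y ^ ((a : ℝ) + ν - 1) * Real.exp (-((ρE⁻¹ + z * ρB⁻¹) * y))) := by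
  rw [gammaScaleDensity, if_pos hy, Finset.mul_sum, Finset.mul_sum]
  refine Finset.sum_congr rfl (fun a _ => ?_)
  have hya : y ^ ((a : ℝ) + ν - 1) = y ^ (ν - 1) * y ^ (a : ℕ) := by
    rw [← Real.rpow_natCast y a, ← Real.rpow_add hy]
    congr 1
    ring
  have hexp : Real.exp (-((ρE⁻¹ + z * ρB⁻¹) * y))
      = Real.exp (-y / ρE) * Real.exp (-(ρB⁻¹ * (z * y))) := by
    rw [← Real.exp_add]
    congr 1
    field_simp
    ring
  rw [hya, hexp, mul_pow]
  ring

lemma final_algebra (n : ℕ) (ν ρB ρE z : ℝ) (hν : 0 < ν) (hρB : 0 < ρB) (hρE : 0 < ρE)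
    (hz : 0 < z) :
    ∑ a ∈ Finset.range n, (ρE ^ (-ν) / Real.Gamma ν * (ρB⁻¹ * z) ^ a / a.factorial) *
        ((1 / (ρE⁻¹ + z * ρB⁻¹)) ^ ((a : ℝ) + ν) * Real.Gamma ((a : ℝ) + ν))
      = (ρB ^ ν / Real.Gamma ν) * ∑ a ∈ Finset.range n,
          (z * ρE) ^ a * Real.Gamma ((a : ℝ) + ν) /
            ((a.factorial : ℝ) * (ρB + z * ρE) ^ ((a : ℝ) + ν)) := by
  rw [Finset.mul_sum]
  refine Finset.sum_congr rfl (fun a _ => ?_)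
  have hD : 0 < ρB + z * ρE := by positivity
  have h1 : 1 / (ρE⁻¹ + z * ρB⁻¹) = ρE * ρB / (ρB + z * ρE) := by
    rw [eq_div_iff hD.ne']
    field_simp
  have hsplit : ∀ (x : ℝ), 0 < x → x ^ ((a : ℝ) + ν) = x ^ (a : ℕ) * x ^ ν := by
    intro x hx
    rw [← Real.rpow_natCast x a, ← Real.rpow_add hx]
  rw [h1, Real.div_rpow (by positivity) hD.le, Real.mul_rpow hρE.le hρB.le,
    hsplit _ hD, hsplit _ hρE, hsplit _ hρB]
  have hEν : ρE ^ (-ν) * ρE ^ ν = 1 := by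
    rw [← Real.rpow_add hρE]
    simp
  have hGν : Real.Gamma ν ≠ 0 := (Real.Gamma_pos_of_pos hν).ne'
  have hfa : (a.factorial : ℝ) ≠ 0 := Nat.cast_ne_zero.mpr a.factorial_ne_zero
  have hDν : (0:ℝ) < (ρB + z * ρE) ^ ν := Real.rpow_pos_of_pos hD ν
  have hEν' : (0:ℝ) < ρE ^ ν := Real.rpow_pos_of_pos hρE ν
  have hBν : (0:ℝ) < ρB ^ ν := Real.rpow_pos_of_pos hρB ν
  rw [mul_pow, inv_pow, mul_pow, Real.rpow_neg hρE.le]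
  field_simp


/-- Single-term instance of Proposition 5: closed-form CDF of `Φ_A = X/Y` for
independent Gamma-distributed `X` (integer shape `n`, scale `ρB`) and `Y`
(shape `ν`, scale `ρE`). -/
theorem stmt14 {Ω : Type*} [MeasurableSpace Ω] (P : Measure Ω) [IsProbabilityMeasure P]
    (n : ℕ) (hn : 0 < n) (ν ρB ρE : ℝ) (hν : 0 < ν) (hρB : 0 < ρB) (hρE : 0 < ρE)
    (X Y : Ω → ℝ) (hX : Measurable X) (hY : Measurable Y)
    (hind : ProbabilityTheory.IndepFun X Y P)
    (hXlaw : Measure.map X P =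
      volume.withDensity (fun x => ENNReal.ofReal (gammaScaleDensity n ρB x)))
    (hYlaw : Measure.map Y P =
      volume.withDensity (fun y => ENNReal.ofReal (gammaScaleDensity ν ρE y))) :
    ∀ z : ℝ, 0 < z → (P {ω | X ω / Y ω ≤ z}).toReal =
      1 - (ρB ^ ν / Real.Gamma ν) * ∑ a ∈ Finset.range n,
        (z * ρE) ^ a * Real.Gamma ((a : ℝ) + ν) /
          ((a.factorial : ℝ) * (ρB + z * ρE) ^ ((a : ℝ) + ν)) := by
  intro z hz
  set μX := Measure.map X P with hμX
  set μY := Measure.map Y P with hμY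
  haveI : IsProbabilityMeasure μX := Measure.isProbabilityMeasure_map hX.aemeasurable
  haveI : IsProbabilityMeasure μY := Measure.isProbabilityMeasure_map hY.aemeasurable
  have hc : (0:ℝ) < ρE⁻¹ + z * ρB⁻¹ := by positivity
  have hXuniv : volume.withDensity
      (fun x => ENNReal.ofReal (gammaScaleDensity n ρB x)) Set.univ = 1 := by
    rw [← hXlaw]
    exact measure_univ
  -- a.e. positivity of Y
  have hYpos : ∀ᵐ ω ∂P, 0 < Y ω := by
    rw [ae_iff]
    have h0 : P (Y ⁻¹' Set.Iic 0) = 0 := by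
      rw [← Measure.map_apply hY measurableSet_Iic, ← hμY, hYlaw]
      exact gamma_Iic_zero ν ρE
    have hseteq : {ω | ¬ 0 < Y ω} = Y ⁻¹' Set.Iic 0 := by
      ext ω
      simp [not_lt]
    rw [hseteq]
    exact h0
  have hmeaslt : MeasurableSet {ω | z * Y ω < X ω} := measurableSet_lt (hY.const_mul z) hX
  have hsets : ({ω | X ω / Y ω ≤ z} : Set Ω) =ᵐ[P] ({ω | z * Y ω < X ω}ᶜ : Set Ω) := by
    rw [Filter.eventuallyEq_set]
    filter_upwards [hYpos] with ω hω
    constructor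
    · intro h hlt
      exact absurd ((div_le_iff₀ hω).mp h) (not_le.mpr hlt)
    · intro h
      exact (div_le_iff₀ hω).mpr (not_lt.mp h)
  -- joint law
  have hprod : Measure.map (fun ω => (Y ω, X ω)) P = μY.prod μX :=
    (ProbabilityTheory.indepFun_iff_map_prod_eq_prod_map_map
      hY.aemeasurable hX.aemeasurable).mp hind.symm
  have hsmeas : MeasurableSet {p : ℝ × ℝ | z * p.1 < p.2} :=
    measurableSet_lt (measurable_fst.const_mul z) measurable_snd
  have hPlt : P {ω | z * Y ω < X ω} = ∫⁻ y, μX (Set.Ioi (z * y)) ∂μY := by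
    have hpre : {ω | z * Y ω < X ω}
        = (fun ω => (Y ω, X ω)) ⁻¹' {p : ℝ × ℝ | z * p.1 < p.2} := rfl
    rw [hpre, ← Measure.map_apply (hY.prodMk hX) hsmeas, hprod,
      Measure.prod_apply hsmeas]
    exact lintegral_congr (fun y => rfl)
  -- compute the lintegral
  set C : ℕ → ℝ := fun a => ρE ^ (-ν) / Real.Gamma ν * (ρB⁻¹ * z) ^ a / a.factorial with hC
  set G : ℝ → ℝ := fun y => ∑ a ∈ Finset.range n,
      C a * (y ^ ((a : ℝ) + ν - 1) * Real.exp (-((ρE⁻¹ + z * ρB⁻¹) * y))) with hG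
  have hCnonneg : ∀ a, 0 ≤ C a := by
    intro a
    rw [hC]
    have := Real.Gamma_pos_of_pos hν
    have h2 : (0:ℝ) ≤ ρE ^ (-ν) := Real.rpow_nonneg hρE.le _
    positivity
  have hterm_int : ∀ a ∈ Finset.range n, IntegrableOn
      (fun y => C a * (y ^ ((a : ℝ) + ν - 1) * Real.exp (-((ρE⁻¹ + z * ρB⁻¹) * y))))
      (Set.Ioi 0) := by
    intro a _
    exact (integrableOn_rpow_exp ((a : ℝ) + ν - 1) _ (by push_cast; linarith [Nat.cast_nonneg (α := ℝ) a]) hc).const_mul (C a)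
  have hG_int : IntegrableOn G (Set.Ioi 0) := by
    rw [hG]
    exact integrable_finset_sum _ hterm_int
  have hG_nonneg : 0 ≤ᵐ[volume.restrict (Set.Ioi 0)] G := by
    refine (ae_restrict_iff' measurableSet_Ioi).mpr (ae_of_all _ (fun y hy => ?_))
    rw [hG]
    refine Finset.sum_nonneg (fun a _ => mul_nonneg (hCnonneg a) (mul_nonneg ?_ (Real.exp_nonneg _)))
    exact Real.rpow_nonneg (le_of_lt hy) _
  have hmonoX : Measurable fun y : ℝ => μX (Set.Ioi (z * y)) := by
    have hanti : Antitone fun t : ℝ => μX (Set.Ioi t) :=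
      fun s t hst => measure_mono (Set.Ioi_subset_Ioi hst)
    exact hanti.measurable.comp (measurable_const_mul z)
  have hkey : ∫⁻ y, μX (Set.Ioi (z * y)) ∂μY = ENNReal.ofReal (∫ y in Set.Ioi 0, G y) := by
    have hfY : Measurable (fun y => ENNReal.ofReal (gammaScaleDensity ν ρE y)) :=
      ENNReal.measurable_ofReal.comp (measurable_gammaScaleDensity ν ρE)
    rw [hYlaw, lintegral_withDensity_eq_lintegral_mul volume hfY hmonoX]
    simp only [Pi.mul_apply]
    rw [← lintegral_add_compl (fun y => (ENNReal.ofReal (gammaScaleDensity ν ρE y))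
        * μX (Set.Ioi (z * y))) measurableSet_Ioi]
    have hzero : ∫⁻ y in (Set.Ioi (0:ℝ))ᶜ, (ENNReal.ofReal (gammaScaleDensity ν ρE y))
        * μX (Set.Ioi (z * y)) = 0 := by
      rw [Set.compl_Ioi]
      rw [setLIntegral_congr_fun measurableSet_Iic (fun y (hy : y ≤ 0) => ?_),
        lintegral_zero]
      rw [gammaScaleDensity, if_neg (not_lt.mpr hy), ENNReal.ofReal_zero, zero_mul]
    rw [hzero, add_zero]
    rw [setLIntegral_congr_fun measurableSet_Ioi (fun y (hy : 0 < y) => ?_)]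
    · exact (ofReal_integral_eq_lintegral_ofReal hG_int hG_nonneg).symm
    · rw [hXlaw, gamma_survival n hn ρB hρB hXuniv (by positivity : (0:ℝ) ≤ z * y),
        ← ENNReal.ofReal_mul (gammaScaleDensity_nonneg hν hρE y)]
      congr 1
      rw [hG, key_pointwise n ν ρB ρE z hν hρB hρE hz hy]
  have hintval : ∫ y in Set.Ioi 0, G y = (ρB ^ ν / Real.Gamma ν) * ∑ a ∈ Finset.range n,
      (z * ρE) ^ a * Real.Gamma ((a : ℝ) + ν) /
        ((a.factorial : ℝ) * (ρB + z * ρE) ^ ((a : ℝ) + ν)) := by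
    rw [hG, integral_finset_sum _ hterm_int, ← final_algebra n ν ρB ρE z hν hρB hρE hz]
    refine Finset.sum_congr rfl (fun a _ => ?_)
    rw [MeasureTheory.integral_const_mul,
      integral_rpow_mul_exp_neg_mul_Ioi (by positivity : (0:ℝ) < (a : ℝ) + ν) hc]
  set T : ℝ := (ρB ^ ν / Real.Gamma ν) * ∑ a ∈ Finset.range n,
      (z * ρE) ^ a * Real.Gamma ((a : ℝ) + ν) /
        ((a.factorial : ℝ) * (ρB + z * ρE) ^ ((a : ℝ) + ν)) with hT
  have hPT : P {ω | z * Y ω < X ω} = ENNReal.ofReal T := by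
    rw [hPlt, hkey, hintval]
  have hTnonneg : 0 ≤ T := by
    rw [← hintval]
    exact setIntegral_nonneg_of_ae_restrict hG_nonneg
  have hle1 : ENNReal.ofReal T ≤ 1 := hPT ▸ prob_le_one
  rw [measure_congr hsets, measure_compl hmeaslt (measure_ne_top P _), measure_univ, hPT,
    ENNReal.toReal_sub_of_le hle1 ENNReal.one_ne_top, ENNReal.toReal_one,
    ENNReal.toReal_ofReal hTnonneg]
end

section
/- Let κ > 0, z ≥ 1, and let Y be a nonnegative random variable with E[((Y+1)·z − 1)^κ] < ∞. For each ρ > 0, let F_ρ : ℝ → ℝ denote the Gamma(κ, ρ) CDF, F_ρ(x) = γ(κ, x/ρ)/Γ(κ) for x ≥ 0 and F_ρ(x) = 0 for x < 0, where γ(s, x) = ∫_0^x t^{s−1} e^{−t} dt is the lower incomplete gamma function. Then lim_{ρ→∞} ρ^κ · E[F_ρ((Y+1)·z − 1)] = E[((Y+1)·z − 1)^κ] / Γ(κ+1). Equivalently, if X_ρ is Gamma(κ, ρ)-distributed and independent of Y, then lim_{ρ→∞} ρ^κ · P((1+X_ρ)/(1+Y) ≤ z) = E[((Y+1)·z − 1)^κ]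 / Γ(κ+1). -/
open MeasureTheory Filter

private lemma sub_key {κ : ℝ} {ρ x : ℝ} (hρ : 0 < ρ) (hx : 0 ≤ x) :
    ρ ^ κ * ∫ t in (0:ℝ)..(x / ρ), t ^ (κ - 1) * Real.exp (-t) =
      ∫ s in (0:ℝ)..x, s ^ (κ - 1) * Real.exp (-(s / ρ)) := by
  have h1 : (∫ s in (0:ℝ)..x, (s / ρ) ^ (κ - 1) * Real.exp (-(s / ρ)))
      = ρ • ∫ t in (0:ℝ)..(x / ρ), t ^ (κ - 1) * Real.exp (-t) := by
    have := intervalIntegral.integral_comp_div (a := (0:ℝ)) (b := x)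
      (fun t => t ^ (κ - 1) * Real.exp (-t)) hρ.ne'
    simpa using this
  have h2 : (∫ s in (0:ℝ)..x, (s / ρ) ^ (κ - 1) * Real.exp (-(s / ρ)))
      = (ρ ^ (κ - 1))⁻¹ * ∫ s in (0:ℝ)..x, s ^ (κ - 1) * Real.exp (-(s / ρ)) := by
    rw [← intervalIntegral.integral_const_mul]
    apply intervalIntegral.integral_congr
    intro s hs
    rw [Set.uIcc_of_le hx] at hs
    show (s / ρ) ^ (κ - 1) * Real.exp (-(s / ρ))
      = (ρ ^ (κ - 1))⁻¹ * (s ^ (κ - 1) * Real.exp (-(s / ρ)))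
    rw [Real.div_rpow hs.1 hρ.le]
    ring
  have hpos : (0:ℝ) < ρ ^ (κ - 1) := Real.rpow_pos_of_pos hρ _
  have hρκ : ρ ^ κ = ρ ^ (κ - 1) * ρ := by
    rw [← Real.rpow_add_one hρ.ne' (κ - 1), sub_add_cancel]
  have h4 : (ρ ^ (κ - 1))⁻¹ * (∫ s in (0:ℝ)..x, s ^ (κ - 1) * Real.exp (-(s / ρ)))
      = ρ * ∫ t in (0:ℝ)..(x / ρ), t ^ (κ - 1) * Real.exp (-t) := by
    rw [← h2, h1, smul_eq_mul]
  calc ρ ^ κ * ∫ t in (0:ℝ)..(x / ρ), t ^ (κ - 1) * Real.exp (-t)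
      = ρ ^ (κ - 1) * (ρ * ∫ t in (0:ℝ)..(x / ρ), t ^ (κ - 1) * Real.exp (-t)) := by
        rw [hρκ]; ring
    _ = ρ ^ (κ - 1) * ((ρ ^ (κ - 1))⁻¹
          * ∫ s in (0:ℝ)..x, s ^ (κ - 1) * Real.exp (-(s / ρ))) := by rw [h4]
    _ = ∫ s in (0:ℝ)..x, s ^ (κ - 1) * Real.exp (-(s / ρ)) := by
        field_simp

/-- Proposition 7 (asymptotic GSOP): with `F ρ` the Gamma(`κ`, scale `ρ`) CDF,
`ρ^κ · E[F ρ ((Y+1)z - 1)] → E[((Y+1)z - 1)^κ] / Γ(κ+1)` as `ρ → ∞`,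
so the outage probability has diversity order `κ`. -/
theorem stmt16 {Ω : Type*} [MeasurableSpace Ω] (P : Measure Ω) [IsProbabilityMeasure P]
    (κ z : ℝ) (hκ : 0 < κ) (hz : 1 ≤ z)
    (Y : Ω → ℝ) (hY : Measurable Y) (hYnonneg : ∀ ω, 0 ≤ Y ω)
    (hint : Integrable (fun ω => ((Y ω + 1) * z - 1) ^ κ) P)
    (F : ℝ → ℝ → ℝ)
    (hF : ∀ ρ x, F ρ x = if x < 0 then 0
      else (∫ t in (0:ℝ)..(x / ρ), t ^ (κ - 1) * Real.exp (-t)) / Real.Gamma κ) :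
    Tendsto (fun ρ : ℝ => ρ ^ κ * ∫ ω, F ρ ((Y ω + 1) * z - 1) ∂P) atTop
      (nhds ((∫ ω, ((Y ω + 1) * z - 1) ^ κ ∂P) / Real.Gamma (κ + 1))) := by
  set g : Ω → ℝ := fun ω => (Y ω + 1) * z - 1 with hgdef
  have hg : ∀ ω, 0 ≤ g ω := by
    intro ω
    have := hYnonneg ω
    simp only [hgdef]
    nlinarith
  have hgmeas : Measurable g := (((hY.add_const 1).mul_const z).sub_const 1)
  have hΓ : 0 < Real.Gamma κ := Real.Gamma_pos_of_pos hκ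
  have hΓ1 : Real.Gamma (κ + 1) = κ * Real.Gamma κ := Real.Gamma_add_one hκ.ne'
  have hΓ1pos : 0 < Real.Gamma (κ + 1) := by rw [hΓ1]; positivity
  set J : ℝ → ℝ → ℝ := fun ρ x => ∫ s in (0:ℝ)..x, s ^ (κ - 1) * Real.exp (-(s / ρ))
    with hJdef
  have hJint : ∀ ρ a b : ℝ, IntervalIntegrable
      (fun s => s ^ (κ - 1) * Real.exp (-(s / ρ))) volume a b := fun ρ a b =>
    (intervalIntegral.intervalIntegrable_rpow' (by linarith)).mul_continuousOn
      (Continuous.continuousOn (by continuity))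
  have hrpowint : ∀ a b : ℝ, IntervalIntegrable (fun s : ℝ => s ^ (κ - 1)) volume a b :=
    fun a b => intervalIntegral.intervalIntegrable_rpow' (by linarith)
  have hrpow_val : ∀ x : ℝ, 0 ≤ x → ∫ s in (0:ℝ)..x, s ^ (κ - 1) = x ^ κ / κ := by
    intro x hx
    rw [integral_rpow (Or.inl (by linarith))]
    rw [sub_add_cancel, Real.zero_rpow hκ.ne']
    ring
  -- nonnegativity and bound for J
  have hJnonneg : ∀ ρ x : ℝ, 0 < ρ → 0 ≤ x → 0 ≤ J ρ x := by
    intro ρ x hρ hx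
    apply intervalIntegral.integral_nonneg hx
    intro s hs
    have h1 : 0 ≤ s ^ (κ - 1) := Real.rpow_nonneg hs.1 _
    positivity
  have hJle : ∀ ρ x : ℝ, 0 < ρ → 0 ≤ x → J ρ x ≤ x ^ κ / κ := by
    intro ρ x hρ hx
    rw [← hrpow_val x hx]
    apply intervalIntegral.integral_mono_on hx (hJint ρ 0 x) (hrpowint 0 x)
    intro s hs
    have h1 : 0 ≤ s ^ (κ - 1) := Real.rpow_nonneg hs.1 _
    have h2 : Real.exp (-(s / ρ)) ≤ 1 := by
      rw [Real.exp_le_one_iff]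
      have : 0 ≤ s / ρ := div_nonneg hs.1 hρ.le
      linarith
    nlinarith
  -- pointwise limit of J
  have hJtendsto : ∀ x : ℝ, 0 ≤ x →
      Tendsto (fun ρ => J ρ x) atTop (nhds (x ^ κ / κ)) := by
    intro x hx
    rw [← hrpow_val x hx]
    apply intervalIntegral.tendsto_integral_filter_of_dominated_convergence
      (fun s => s ^ (κ - 1))
    · filter_upwards with ρ
      exact (Measurable.aestronglyMeasurable (by fun_prop))
    · filter_upwards [eventually_ge_atTop (1:ℝ)] with ρ hρ
      filter_upwards with s hs
      rw [Set.uIoc_of_le hx] at hs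
      have h1 : 0 ≤ s ^ (κ - 1) := Real.rpow_nonneg hs.1.le _
      have h2 : Real.exp (-(s / ρ)) ≤ 1 := by
        rw [Real.exp_le_one_iff]
        have : 0 ≤ s / ρ := div_nonneg hs.1.le (by linarith)
        linarith
      have h3 : 0 < Real.exp (-(s / ρ)) := Real.exp_pos _
      rw [Real.norm_eq_abs, abs_of_nonneg (by positivity)]
      nlinarith
    · exact hrpowint 0 x
    · filter_upwards with s hs
      rw [Set.uIoc_of_le hx] at hs
      have h1 : Tendsto (fun ρ : ℝ => s / ρ) atTop (nhds 0) :=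
        tendsto_const_nhds.div_atTop tendsto_id
      have h1' : Tendsto (fun ρ : ℝ => -(s / ρ)) atTop (nhds 0) := by
        simpa using h1.neg
      have h2 : Tendsto (fun ρ : ℝ => Real.exp (-(s / ρ))) atTop (nhds 1) := by
        have := (Real.continuous_exp.tendsto 0).comp h1'
        simpa [Function.comp_def] using this
      simpa using tendsto_const_nhds.mul h2
  -- continuity of the primitive
  have hJcont : ∀ ρ : ℝ, Continuous (fun x => J ρ x) := fun ρ =>
    intervalIntegral.continuous_primitive (hJint ρ) 0
  -- outer dominated convergence
  have houter : Tendsto (fun ρ => ∫ ω, J ρ (g ω) / Real.Gamma κ ∂P) atTop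
      (nhds (∫ ω, g ω ^ κ / Real.Gamma (κ + 1) ∂P)) := by
    apply tendsto_integral_filter_of_dominated_convergence
      (fun ω => g ω ^ κ / Real.Gamma (κ + 1))
    · filter_upwards with ρ
      exact (((hJcont ρ).measurable.comp hgmeas).div_const _).aestronglyMeasurable
    · filter_upwards [eventually_gt_atTop (0:ℝ)] with ρ hρ
      filter_upwards with ω
      have h0 := hJnonneg ρ (g ω) hρ (hg ω)
      have h1 := hJle ρ (g ω) hρ (hg ω)
      rw [Real.norm_eq_abs, abs_of_nonneg (by positivity), hΓ1, ← div_div]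
      gcongr
    · exact hint.div_const _
    · filter_upwards with ω
      have := (hJtendsto (g ω) (hg ω)).div_const (Real.Gamma κ)
      rw [div_div, ← hΓ1] at this
      exact this
  -- rewrite the original function eventually
  have key : ∀ᶠ ρ in atTop,
      ρ ^ κ * ∫ ω, F ρ ((Y ω + 1) * z - 1) ∂P = ∫ ω, J ρ (g ω) / Real.Gamma κ ∂P := by
    filter_upwards [eventually_gt_atTop (0:ℝ)] with ρ hρ
    rw [← MeasureTheory.integral_const_mul]
    apply integral_congr_ae
    filter_upwards with ω
    have hgω : ¬ ((Y ω + 1) * z - 1 < 0) := not_lt.2 (hg ω)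
    rw [hF, if_neg hgω]
    rw [mul_div_assoc']
    congr 1
    exact sub_key hρ (hg ω)
  have hval : (∫ ω, g ω ^ κ / Real.Gamma (κ + 1) ∂P)
      = (∫ ω, ((Y ω + 1) * z - 1) ^ κ ∂P) / Real.Gamma (κ + 1) := integral_div _ _
  rw [← hval]
  exact houter.congr' (by filter_upwards [key] with ρ h using h.symm)
end
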